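/- First-order characterization of the regularized dual optimum: (φ¹,...,φᵐ) maximizes the functional ∑ᵢ∑_{xⁱ}φⁱ_{xⁱ}μⁱ_{xⁱ} - η∑_{x̄}exp((∑ᵢφⁱ_{x̄ⁱ}-c(x̄))/η)(⊗μⁱ)_{x̄} if and only if for every i and every z ∈ Xⁱ, ∑_{x̄ : x̄ⁱ=z} exp((∑ⱼφʲ_{x̄ʲ} - c(x̄))/η) ∏_{j≠i} μʲ_{x̄ʲ} = 1, i.e. the Gibbs measure exp((∑φⁱ-c)/η)·⊗μⁱ has marginals μ¹,...,μᵐ. -/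

import Mathlib

open scoped BigOperators

/-- The regularized dual functional. -/
noncomputable def dualFunctional {ι : Type*} [Fintype ι] [DecidableEq ι]
    {X : ι → Type*} [∀ i, Fintype (X i)]
    (μ : ∀ i, X i → ℝ) (c : (∀ i, X i) → ℝ) (η : ℝ)
    (ψ : ∀ i, X i → ℝ) : ℝ :=
  (∑ i, ∑ z, ψ i z * μ i z)
    - η * ∑ xb : ∀ i, X i, Real.exp (((∑ i, ψ i (xb i)) - c xb) / η) * ∏ i, μ i (xb i)

/-- Fiberwise decomposition of a sum over a product space. -/
lemma fiber_sum {ι : Type*} [Fintype ι] [DecidableEq ι]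
    {X : ι → Type*} [∀ i, Fintype (X i)] [∀ i, DecidableEq (X i)]
    (j : ι) (f : X j → ℝ) (g : (∀ i, X i) → ℝ) :
    ∑ xb : ∀ i, X i, f (xb j) * g xb
      = ∑ z, f z * ∑ xb : ∀ i, X i, if xb j = z then g xb else 0 := by
  have h : ∀ xb : ∀ i, X i,
      f (xb j) * g xb = ∑ z, if xb j = z then f z * g xb else 0 := by
    intro xb
    rw [Finset.sum_ite_eq]
    simp
  rw [Finset.sum_congr rfl fun xb _ => h xb, Finset.sum_comm]
  refine Finset.sum_congr rfl fun z _ => ?_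
  rw [Finset.mul_sum]
  refine Finset.sum_congr rfl fun xb _ => ?_
  split <;> simp

/-- Splitting the full product into the `j`-th factor times the rest. -/
lemma prod_split {ι : Type*} [Fintype ι] [DecidableEq ι]
    {X : ι → Type*} [∀ i, Fintype (X i)]
    (μ : ∀ i, X i → ℝ) (j : ι) (xb : ∀ i, X i) :
    ∏ i, μ i (xb i) = μ j (xb j) * ∏ i ∈ Finset.univ.erase j, μ i (xb i) :=
  (Finset.mul_prod_erase Finset.univ (fun i => μ i (xb i)) (Finset.mem_univ j)).symm

/-- Sum over all coordinates after updating one coordinate function. -/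
lemma sum_update {ι : Type*} [Fintype ι] [DecidableEq ι]
    {X : ι → Type*} [∀ i, Fintype (X i)]
    (φ : ∀ i, X i → ℝ) (i : ι) (g : X i → ℝ) (F : ∀ j, (X j → ℝ) → ℝ) :
    ∑ j, F j (Function.update φ i g j)
      = (∑ j, F j (φ j)) + (F i g - F i (φ i)) := by
  rw [← Finset.sum_erase_add _ _ (Finset.mem_univ i),
      ← Finset.sum_erase_add _ (fun j => F j (φ j)) (Finset.mem_univ i)]
  have h : ∀ j ∈ Finset.univ.erase i,
      F j (Function.update φ i g j) = F j (φ j) := by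
    intro j hj
    rw [Function.update_of_ne (Finset.mem_erase.mp hj).1]
  rw [Finset.sum_congr rfl h, Function.update_self]
  ring

theorem stmt_17 {ι : Type*} [Fintype ι] [DecidableEq ι]
    {X : ι → Type*} [∀ i, Fintype (X i)] [∀ i, DecidableEq (X i)]
    (μ : ∀ i, X i → ℝ) (hμ : ∀ i z, 0 < μ i z) (hμs : ∀ i, ∑ z, μ i z = 1)
    (c : (∀ i, X i) → ℝ) (η : ℝ) (hη : 0 < η)
    (φ : ∀ i, X i → ℝ) :
    (∀ ψ, dualFunctional μ c η ψ ≤ dualFunctional μ c η φ)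
      ↔ ∀ i (z : X i),
          (∑ xb : ∀ j, X j, if xb i = z then
              Real.exp (((∑ j, φ j (xb j)) - c xb) / η)
                * ∏ j ∈ Finset.univ.erase i, μ j (xb j)
            else 0) = 1 := by
  classical
  -- every X j is nonempty, otherwise hμs fails
  have hne : ∀ j, Nonempty (X j) := by
    intro j
    by_contra h
    rw [not_nonempty_iff] at h
    have := hμs j
    rw [Finset.univ_eq_empty, Finset.sum_empty] at this
    norm_num at this
  -- abbreviation for the Gibbs density
  set E : (∀ i, X i) → ℝ := fun xb => Real.exp (((∑ j, φ j (xb j)) - c xb) / η) with hE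
  have hEdef : ∀ xb : ∀ j, X j,
      Real.exp (((∑ j, φ j (xb j)) - c xb) / η) = E xb := fun _ => rfl
  have hEpos : ∀ xb, 0 < E xb := fun xb => Real.exp_pos _
  -- relation between full-product fibered sums and the statement's sums
  have hfiber_eq : ∀ (i : ι) (z : X i),
      (∑ xb : ∀ j, X j, if xb i = z then E xb * ∏ j, μ j (xb j) else 0)
        = μ i z * ∑ xb : ∀ j, X j,
            if xb i = z then E xb * ∏ j ∈ Finset.univ.erase i, μ j (xb j) else 0 := by
    intro i z
    rw [Finset.mul_sum]
    refine Finset.sum_congr rfl fun xb _ => ?_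
    by_cases hxz : xb i = z
    · simp only [hxz, if_true]
      rw [prod_split μ i xb, hxz]
      ring
    · simp [hxz]
  constructor
  · -- maximality implies the marginal conditions
    intro hmax i z
    set S : ℝ := ∑ xb : ∀ j, X j,
        if xb i = z then E xb * ∏ j ∈ Finset.univ.erase i, μ j (xb j) else 0 with hS
    -- S > 0
    have hSpos : 0 < S := by
      have hw : ∃ xb : ∀ j, X j, xb i = z := by
        refine ⟨Function.update (fun j => Classical.arbitrary (X j)) i z, ?_⟩
        simp
      obtain ⟨w, hw⟩ := hw
      refine Finset.sum_pos' (fun xb _ => ?_) ⟨w, Finset.mem_univ w, ?_⟩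
      · split
        · exact le_of_lt (mul_pos (hEpos _) (Finset.prod_pos fun j _ => hμ j _))
        · exact le_rfl
      · rw [if_pos hw]
        exact mul_pos (hEpos _) (Finset.prod_pos fun j _ => hμ j _)
    -- key inequality from maximality along the perturbation of φ i at z
    have key : ∀ t : ℝ, t * μ i z ≤ η * (Real.exp (t / η) - 1) * (μ i z * S) := by
      intro t
      set g : X i → ℝ := fun w => φ i w + if w = z then t else 0 with hg
      set ψ : ∀ j, X j → ℝ := Function.update φ i g with hψ
      have h1 : ∑ j, ∑ w, ψ j w * μ j w
          = (∑ j, ∑ w, φ j w * μ j w) + t * μ i z := by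
        rw [hψ, sum_update φ i g (fun j p => ∑ w, p w * μ j w)]
        have : ∑ w, g w * μ i w = (∑ w, φ i w * μ i w) + t * μ i z := by
          rw [hg]
          simp only [add_mul]
          rw [Finset.sum_add_distrib]
          congr 1
          simp [ite_mul]
        rw [this]; ring
      have h2 : ∀ xb : ∀ j, X j,
          ∑ j, ψ j (xb j) = (∑ j, φ j (xb j)) + (if xb i = z then t else 0) := by
        intro xb
        rw [hψ, sum_update φ i g (fun j p => p (xb j)), hg]
        simp
      have h3 : ∑ xb : ∀ j, X j,
            Real.exp (((∑ j, ψ j (xb j)) - c xb) / η) * ∏ j, μ j (xb j)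
          = (∑ xb : ∀ j, X j, E xb * ∏ j, μ j (xb j))
            + (Real.exp (t / η) - 1) * (μ i z * S) := by
        have hterm : ∀ xb : ∀ j, X j,
            Real.exp (((∑ j, ψ j (xb j)) - c xb) / η) * ∏ j, μ j (xb j)
              = E xb * ∏ j, μ j (xb j)
                + (Real.exp (t / η) - 1)
                  * (if xb i = z then E xb * ∏ j, μ j (xb j) else 0) := by
          intro xb
          rw [h2 xb]
          have : ((∑ j, φ j (xb j)) + (if xb i = z then t else 0) - c xb) / η
              = ((∑ j, φ j (xb j)) - c xb) / η + (if xb i = z then t else 0) / η := by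
            ring
          rw [this, Real.exp_add]
          simp only [hE]
          by_cases hxz : xb i = z
          · simp only [hxz, if_true]
            ring
          · simp only [hxz, if_false]
            simp [Real.exp_zero]
        rw [Finset.sum_congr rfl fun xb _ => hterm xb, Finset.sum_add_distrib,
            ← Finset.mul_sum, hfiber_eq i z, ← hS]
      have := hmax ψ
      rw [dualFunctional, dualFunctional, h1, h3] at this
      simp only [hEdef] at this
      linarith
    -- use t = -η * log S
    have hkey := key (-(η * Real.log S))
    have hexp : Real.exp (-(η * Real.log S) / η) = S⁻¹ := by
      rw [show -(η * Real.log S) / η = -Real.log S by field_simp,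
          Real.exp_neg, Real.exp_log hSpos]
    rw [hexp] at hkey
    have hμpos := hμ i z
    have hineq : S - 1 ≤ Real.log S := by
      have h' : η * (S⁻¹ - 1) * (μ i z * S) = η * (1 - S) * μ i z := by
        field_simp
      rw [h'] at hkey
      have h2 := (mul_le_mul_iff_of_pos_right hμpos).mp hkey
      by_contra hc
      push_neg at hc
      have h3 : η * (Real.log S - (S - 1)) < 0 :=
        mul_neg_of_pos_of_neg hη (by linarith)
      nlinarith
    have hlog : Real.log S ≤ S - 1 := Real.log_le_sub_one_of_pos hSpos
    have heq : Real.log S = S - 1 := le_antisymm hlog hineq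
    by_contra hS1
    have hlogne : Real.log S ≠ 0 := by
      intro h0
      rw [h0] at heq
      exact hS1 (by linarith)
    have := Real.add_one_lt_exp hlogne
    rw [Real.exp_log hSpos] at this
    linarith
  · -- the marginal conditions imply maximality
    intro hcond ψ
    simp only [hEdef] at hcond
    rw [dualFunctional, dualFunctional]
    simp only [hEdef]
    set d : ∀ j, X j → ℝ := fun j w => ψ j w - φ j w with hd
    -- pointwise convexity inequality for exp (multiplied through by η)
    have hconv : ∀ xb : ∀ j, X j,
        η * (E xb * ∏ j, μ j (xb j))
          + (∑ j, d j (xb j)) * (E xb * ∏ j, μ j (xb j))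
          ≤ η * (Real.exp (((∑ j, ψ j (xb j)) - c xb) / η) * ∏ j, μ j (xb j)) := by
      intro xb
      have hsum : ((∑ j, ψ j (xb j)) - c xb) / η
          = ((∑ j, φ j (xb j)) - c xb) / η + (∑ j, d j (xb j)) / η := by
        rw [hd, Finset.sum_sub_distrib]
        ring
      rw [hsum, Real.exp_add, hEdef xb]
      have h1 : (∑ j, d j (xb j)) + η ≤ η * Real.exp ((∑ j, d j (xb j)) / η) := by
        have h0 := Real.add_one_le_exp ((∑ j, d j (xb j)) / η)
        have h2 := mul_le_mul_of_nonneg_left h0 (le_of_lt hη)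
        rw [mul_add, mul_one, mul_comm η ((∑ j, d j (xb j)) / η),
            div_mul_cancel₀ _ (ne_of_gt hη)] at h2
        exact h2
      have hp : 0 < E xb * ∏ j, μ j (xb j) :=
        mul_pos (hEpos xb) (Finset.prod_pos fun j _ => hμ j _)
      nlinarith [mul_le_mul_of_nonneg_left h1 (le_of_lt hp)]
    -- the linearized term equals the linear difference
    have hlin : ∑ xb : ∀ j, X j, (∑ j, d j (xb j)) * (E xb * ∏ j, μ j (xb j))
        = ∑ j, ∑ w, d j w * μ j w := by
      have hswap : ∑ xb : ∀ j, X j, (∑ j, d j (xb j)) * (E xb * ∏ j, μ j (xb j))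
          = ∑ j, ∑ xb : ∀ k, X k, d j (xb j) * (E xb * ∏ k, μ k (xb k)) := by
        rw [Finset.sum_comm]
        exact Finset.sum_congr rfl fun xb _ => by rw [Finset.sum_mul]
      rw [hswap]
      refine Finset.sum_congr rfl fun j _ => ?_
      rw [fiber_sum j (d j) (fun xb => E xb * ∏ k, μ k (xb k))]
      refine Finset.sum_congr rfl fun w _ => ?_
      rw [hfiber_eq j w, hcond j w, mul_one, mul_comm]
    -- combine
    have hsum_le :
        η * (∑ xb : ∀ j, X j, E xb * ∏ j, μ j (xb j))
            + ((∑ j, ∑ w, ψ j w * μ j w) - ∑ j, ∑ w, φ j w * μ j w)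
          ≤ η * ∑ xb : ∀ j, X j,
              Real.exp (((∑ j, ψ j (xb j)) - c xb) / η) * ∏ j, μ j (xb j) := by
      have hlindiff : ∑ j, ∑ w, d j w * μ j w
          = (∑ j, ∑ w, ψ j w * μ j w) - ∑ j, ∑ w, φ j w * μ j w := by
        rw [← Finset.sum_sub_distrib]
        refine Finset.sum_congr rfl fun j _ => ?_
        rw [← Finset.sum_sub_distrib]
        refine Finset.sum_congr rfl fun w _ => ?_
        rw [hd]; ring
      have h := Finset.sum_le_sum (fun xb (_ : xb ∈ Finset.univ) => hconv xb)
      rw [Finset.sum_add_distrib, ← Finset.mul_sum, ← Finset.mul_sum, hlin,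
          hlindiff] at h
      exact h
    linarith [hsum_le]
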